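/- Let $R$ be a commutative ring, $R^s \subseteq R$ a subring, and $x_s \in R$ with $R = R^s \oplus x_s R^s$ as $R^s$-modules, $x_s^2 \in R^s$. Let $M, N$ be $(R,R)$-bimodules and $\theta_s M = R \otimes_{R^s} M$. Then the map $\mathfrak{F}$ sending an $(R,R)$-bimodule morphism $f : \theta_s M \to N$ to the map $m \mapsto x_s \otimes f(1 \otimes m) + 1 \otimes f(1 \otimes x_s m)$ is a bijection from $\mathrm{Hom}_{(R,R)}(\theta_s M, N)$ onto $\mathrm{Hom}_{(R,R)}(M, \theta_s N)$, with inverse sending $g$ to $\lambda \otimes m \mapsto \lambda\, g_2(m)$ where $g(m) = 1 \otimes g_1(m) + x_s \otimes g_2(m)$ is the unique decomposition. -/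
import Mathlib
open scoped TensorProduct
open MulOpposite

set_option maxHeartbeats 1000000 in
/-- `R = S ⊕ xS` with `x² ∈ S`; `M, N` are `(R,R)`-bimodules
(left `R`-action, right action encoded as a left `Rᵐᵒᵖ`-action commuting with
the left one) and `θₛM = R ⊗_S M`.  The map `𝔉` sending a bimodule morphism
`f : θₛM → N` to `m ↦ x ⊗ f(1 ⊗ m) + 1 ⊗ f(1 ⊗ x m)` is a bijection from the
set of bimodule morphisms `θₛM → N` onto the set of bimodule morphisms
`M → θₛN`; its inverse sends `g` to `λ ⊗ m ↦ λ g₂(m)`, where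
`g(m) = 1 ⊗ g₁(m) + x ⊗ g₂(m)` is the unique decomposition.
(`ρ r` is right multiplication by `r` on the second factor of `θₛN`.) -/
theorem stmt6
    (R : Type) [CommRing R] (S : Subring R) (x : R)
    (hdec : ∀ p : R, ∃ p₁ ∈ S, ∃ p₂ ∈ S, p = p₁ + x * p₂)
    (huniqR : ∀ p₁ p₂ : R, p₁ ∈ S → p₂ ∈ S → p₁ + x * p₂ = 0 → p₁ = 0 ∧ p₂ = 0)
    (hx2 : x * x ∈ S)
    (M N : Type) [AddCommGroup M] [Module R M] [Module Rᵐᵒᵖ M]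
    [SMulCommClass R Rᵐᵒᵖ M]
    [AddCommGroup N] [Module R N] [Module Rᵐᵒᵖ N] [SMulCommClass R Rᵐᵒᵖ N]
    (huniq : ∀ n₁ n₂ : N, (1 : R) ⊗ₜ n₁ + x ⊗ₜ n₂ = (0 : R ⊗[S] N) → n₁ = 0 ∧ n₂ = 0)
    (ρ : R → R ⊗[S] N → R ⊗[S] N)
    (hρadd : ∀ r (t t' : R ⊗[S] N), ρ r (t + t') = ρ r t + ρ r t')
    (hρ : ∀ (r p : R) (n : N), ρ r (p ⊗ₜ n) = p ⊗ₜ (op r • n))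
    (Φ : (R ⊗[S] M → N) → (M → R ⊗[S] N))
    (hΦ : ∀ f m, Φ f m = x ⊗ₜ f ((1 : R) ⊗ₜ m) + (1 : R) ⊗ₜ f ((1 : R) ⊗ₜ (x • m))) :
    Set.BijOn Φ
      {f : R ⊗[S] M → N |
        (∀ t t', f (t + t') = f t + f t') ∧
        (∀ (r : R) t, f (r • t) = r • f t) ∧
        (∀ (r p : R) (m : M), f (p ⊗ₜ (op r • m)) = op r • f (p ⊗ₜ m))}
      {g : M → R ⊗[S] N |
        (∀ m m', g (m + m') = g m + g m') ∧
        (∀ (r : R) (m : M), g (r • m) = r • g m) ∧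
        (∀ (r : R) (m : M), g (op r • m) = ρ r (g m))} ∧
    (∀ g : M → R ⊗[S] N,
      (∀ m m', g (m + m') = g m + g m') →
      ∀ g₁ g₂ : M → N, (∀ m, g m = (1 : R) ⊗ₜ g₁ m + x ⊗ₜ g₂ m) →
      ∀ f : R ⊗[S] M → N,
        ((∀ t t', f (t + t') = f t + f t') ∧
         (∀ (r : R) t, f (r • t) = r • f t) ∧
         (∀ (r p : R) (m : M), f (p ⊗ₜ (op r • m)) = op r • f (p ⊗ₜ m))) →
        Φ f = g → ∀ (lam : R) (m : M), f (lam ⊗ₜ m) = lam • g₂ m) := by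
  -- moving S-elements across the tensor sign
  have keyN : ∀ s : R, s ∈ S → ∀ (p : R) (n : N),
      (s * p) ⊗ₜ[S] n = p ⊗ₜ[S] (s • n) := fun s hs p n =>
    TensorProduct.smul_tmul (⟨s, hs⟩ : S) p n
  have keyM : ∀ s : R, s ∈ S → ∀ (p : R) (m : M),
      (s * p) ⊗ₜ[S] m = p ⊗ₜ[S] (s • m) := fun s hs p m =>
    TensorProduct.smul_tmul (⟨s, hs⟩ : S) p m
  -- uniqueness of decompositions
  have uniq2 : ∀ n₁ n₂ n₁' n₂' : N,
      (1 : R) ⊗ₜ[S] n₁ + x ⊗ₜ[S] n₂ = (1 : R) ⊗ₜ[S] n₁' + x ⊗ₜ[S] n₂' →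
      n₁ = n₁' ∧ n₂ = n₂' := by
    intro n₁ n₂ n₁' n₂' h
    have h0 : (1 : R) ⊗ₜ[S] (n₁ - n₁') + x ⊗ₜ[S] (n₂ - n₂') = (0 : R ⊗[S] N) := by
      rw [TensorProduct.tmul_sub, TensorProduct.tmul_sub, sub_add_sub_comm, h, sub_self]
    obtain ⟨e1, e2⟩ := huniq _ _ h0
    exact ⟨sub_eq_zero.mp e1, sub_eq_zero.mp e2⟩
  -- facts about f in the source set
  have ftm : ∀ f : R ⊗[S] M → N, (∀ (r : R) t, f (r • t) = r • f t) →
      ∀ (r p : R) (m : M), f ((r * p) ⊗ₜ m) = r • f (p ⊗ₜ m) := by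
    intro f flin r p m
    have h : (r * p) ⊗ₜ[S] m = r • (p ⊗ₜ[S] m) := by
      rw [TensorProduct.smul_tmul', smul_eq_mul]
    rw [h, flin]
  have f1 : ∀ f : R ⊗[S] M → N, (∀ (r : R) t, f (r • t) = r • f t) →
      ∀ s : R, s ∈ S → ∀ m : M, f ((1 : R) ⊗ₜ (s • m)) = s • f ((1 : R) ⊗ₜ m) := by
    intro f flin s hs m
    rw [← keyM s hs 1 m, ftm f flin]
  have fzero : ∀ f : R ⊗[S] M → N, (∀ t t', f (t + t') = f t + f t') → f 0 = 0 := by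
    intro f fadd
    have := fadd 0 0
    rw [add_zero] at this
    exact (left_eq_add.mp this)
  constructor
  · refine ⟨?_, ?_, ?_⟩
    · -- MapsTo
      rintro f ⟨fadd, flin, frlin⟩
      refine ⟨?_, ?_, ?_⟩
      · -- additivity of Φ f
        intro m m'
        have ea : f ((1:R) ⊗ₜ (m + m')) = f ((1:R) ⊗ₜ m) + f ((1:R) ⊗ₜ m') := by
          rw [TensorProduct.tmul_add, fadd]
        have eb : f ((1:R) ⊗ₜ (x • (m + m')))
            = f ((1:R) ⊗ₜ (x • m)) + f ((1:R) ⊗ₜ (x • m')) := by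
          rw [smul_add, TensorProduct.tmul_add, fadd]
        rw [hΦ, hΦ, hΦ, ea, eb, TensorProduct.tmul_add, TensorProduct.tmul_add]
        abel
      · -- left linearity of Φ f
        intro r m
        obtain ⟨r₁, h1, r₂, h2, hr⟩ := hdec r
        rw [hΦ, hΦ]
        have e1 : f ((1 : R) ⊗ₜ (r • m)) = r₁ • f ((1:R) ⊗ₜ m) + r₂ • f ((1:R) ⊗ₜ (x • m)) := by
          have : r • m = r₁ • m + r₂ • (x • m) := by
            rw [hr]; module
          rw [this, TensorProduct.tmul_add, fadd, f1 f flin r₁ h1, f1 f flin r₂ h2]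
        have e2 : f ((1 : R) ⊗ₜ (x • (r • m)))
            = (x * x * r₂) • f ((1:R) ⊗ₜ m) + r₁ • f ((1:R) ⊗ₜ (x • m)) := by
          have : x • (r • m) = (x * x * r₂) • m + r₁ • (x • m) := by
            rw [hr]; module
          rw [this, TensorProduct.tmul_add, fadd, f1 f flin _ (S.mul_mem hx2 h2),
            f1 f flin r₁ h1]
        rw [e1, e2, smul_add, TensorProduct.smul_tmul', TensorProduct.smul_tmul',
          smul_eq_mul, smul_eq_mul]
        have hrx : r * x = r₁ * x + (x * x * r₂) * 1 := by rw [hr]; ring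
        have hr1 : r * 1 = r₁ * 1 + r₂ * x := by rw [hr]; ring
        rw [hrx, hr1, TensorProduct.add_tmul, TensorProduct.add_tmul,
          keyN r₁ h1 x, keyN _ (S.mul_mem hx2 h2) 1, keyN r₁ h1 1, keyN r₂ h2 x,
          TensorProduct.tmul_add, TensorProduct.tmul_add]
        abel
      · -- right linearity of Φ f
        intro r m
        rw [hΦ, hΦ, hρadd, hρ, hρ, frlin]
        have : x • (op r • m) = op r • (x • m) := smul_comm x (op r) m
        rw [this, frlin]
    · -- InjOn
      rintro f ⟨fadd, flin, frlin⟩ f' ⟨fadd', flin', frlin'⟩ h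
      have h1 : ∀ m, f ((1:R) ⊗ₜ m) = f' ((1:R) ⊗ₜ m) := by
        intro m
        have := congrFun h m
        rw [hΦ, hΦ] at this
        rw [add_comm, add_comm (x ⊗ₜ f' ((1:R) ⊗ₜ m))] at this
        exact (uniq2 _ _ _ _ this).2
      funext t
      induction t using TensorProduct.induction_on with
      | zero => rw [fzero f fadd, fzero f' fadd']
      | tmul p m =>
          rw [← mul_one p, ftm f flin, ftm f' flin', h1]
      | add a b ha hb => rw [fadd, fadd', ha, hb]
    · -- SurjOn
      rintro g ⟨gadd, glin, grlin⟩
      have hex : ∀ t : R ⊗[S] N, ∃ n₁ n₂ : N, t = (1:R) ⊗ₜ n₁ + x ⊗ₜ n₂ := by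
        intro t
        induction t using TensorProduct.induction_on with
        | zero => exact ⟨0, 0, by simp⟩
        | tmul p n =>
            obtain ⟨p₁, h1, p₂, h2, hp⟩ := hdec p
            refine ⟨p₁ • n, p₂ • n, ?_⟩
            rw [hp, TensorProduct.add_tmul, ← keyN p₁ h1 1 n, mul_one,
              mul_comm x p₂, keyN p₂ h2 x n]
        | add a b ha hb =>
            obtain ⟨a1, a2, ha'⟩ := ha
            obtain ⟨b1, b2, hb'⟩ := hb
            refine ⟨a1 + b1, a2 + b2, ?_⟩
            rw [ha', hb', TensorProduct.tmul_add, TensorProduct.tmul_add]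
            abel
      choose g₁ g₂ hg12 using fun m => hex (g m)
      -- g₂ additive
      have g2add : ∀ m m', g₂ (m + m') = g₂ m + g₂ m' ∧ g₁ (m + m') = g₁ m + g₁ m' := by
        intro m m'
        have h := gadd m m'
        rw [hg12, hg12, hg12] at h
        have h' : (1:R) ⊗ₜ[S] g₁ (m+m') + x ⊗ₜ[S] g₂ (m+m')
            = (1:R) ⊗ₜ[S] (g₁ m + g₁ m') + x ⊗ₜ[S] (g₂ m + g₂ m') := by
          rw [h, TensorProduct.tmul_add, TensorProduct.tmul_add]; abel
        exact ⟨(uniq2 _ _ _ _ h').2, (uniq2 _ _ _ _ h').1⟩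
      -- g₂ is S-linear
      have g2S : ∀ s : R, s ∈ S → ∀ m, g₂ (s • m) = s • g₂ m := by
        intro s hs m
        have h := glin s m
        rw [hg12, hg12, smul_add, TensorProduct.smul_tmul', TensorProduct.smul_tmul',
          smul_eq_mul, smul_eq_mul] at h
        have e1 : (s * 1) ⊗ₜ[S] g₁ m = (1:R) ⊗ₜ[S] (s • g₁ m) := keyN s hs 1 (g₁ m)
        have e2 : (s * x) ⊗ₜ[S] g₂ m = x ⊗ₜ[S] (s • g₂ m) := keyN s hs x (g₂ m)
        rw [e1, e2] at h
        exact (uniq2 _ _ _ _ h).2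
      -- g₂ (x • m) = g₁ m
      have g2x : ∀ m, g₂ (x • m) = g₁ m := by
        intro m
        have h := glin x m
        rw [hg12, hg12, smul_add, TensorProduct.smul_tmul', TensorProduct.smul_tmul',
          smul_eq_mul, smul_eq_mul, mul_one, ← mul_one (x*x), keyN (x*x) hx2 1] at h
        have h' : (1:R) ⊗ₜ[S] g₁ (x • m) + x ⊗ₜ[S] g₂ (x • m)
            = (1:R) ⊗ₜ[S] ((x*x) • g₂ m) + x ⊗ₜ[S] g₁ m := by rw [h, add_comm]
        exact (uniq2 _ _ _ _ h').2
      -- g₂ commutes with the right action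
      have g2r : ∀ (r : R) (m : M), g₂ (op r • m) = op r • g₂ m := by
        intro r m
        have h := grlin r m
        rw [hg12, hg12, hρadd, hρ, hρ] at h
        exact (uniq2 _ _ _ _ h).2
      -- build f by lifting
      refine ⟨TensorProduct.lift (LinearMap.mk₂ S (fun (p : R) (m : M) => p • g₂ m)
        (fun p p' m => by
          show (p + p') • g₂ m = p • g₂ m + p' • g₂ m
          rw [add_smul])
        (fun s p m => by
          show ((s : R) * p) • g₂ m = (s : R) • (p • g₂ m)
          rw [mul_smul])
        (fun p m m' => by
          show p • g₂ (m + m') = p • g₂ m + p • g₂ m'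
          rw [(g2add m m').1, smul_add])
        (fun s p m => by
          show p • g₂ ((s : R) • m) = (s : R) • (p • g₂ m)
          rw [g2S s s.2 m, smul_comm])), ?_, ?_⟩
      · refine ⟨fun t t' => map_add _ t t', ?_, ?_⟩
        · intro r t
          induction t using TensorProduct.induction_on with
          | zero => rw [smul_zero, map_zero, smul_zero]
          | tmul p m =>
              rw [TensorProduct.smul_tmul', smul_eq_mul, TensorProduct.lift.tmul,
                TensorProduct.lift.tmul]
              show (r * p) • g₂ m = r • (p • g₂ m)
              rw [mul_smul]
          | add a b ha hb => rw [smul_add, map_add, map_add, ha, hb, smul_add]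
        · intro r p m
          rw [TensorProduct.lift.tmul, TensorProduct.lift.tmul]
          show p • g₂ (op r • m) = op r • (p • g₂ m)
          rw [g2r, smul_comm]
      · funext m
        rw [hΦ, TensorProduct.lift.tmul, TensorProduct.lift.tmul]
        show x ⊗ₜ[S] ((1:R) • g₂ m) + (1:R) ⊗ₜ[S] ((1:R) • g₂ (x • m)) = g m
        rw [one_smul, one_smul, g2x, hg12, add_comm]
  · -- the inverse formula
    rintro g _ g₁ g₂ hg12 f ⟨fadd, flin, frlin⟩ hfg lam m
    have h := congrFun hfg m
    rw [hΦ, hg12] at h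
    rw [add_comm] at h
    have := (uniq2 _ _ _ _ h).2
    rw [← mul_one lam, ftm f flin, this, mul_one]
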